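/- For all natural numbers n and k, the coefficient of x^k in Q̃_n(x) equals the coefficient of t^n in the formal power series ((1+bt)/(1+(2b+c)t+b(b+c)t^2)) · (t/(1+(2b+c)t+b(b+c)t^2))^k over ℝ. (That is, the coefficient array of the orthogonal polynomials Q̃_n is the Riordan array ((1+bt)/(1+(2b+c)t+b(b+c)t^2), t/(1+(2b+c)t+b(b+c)t^2)).) -/

import Mathlib

open PowerSeries

/-- The coefficient array of the orthogonal polynomials `Q̃_n` is the Riordan
array `((1+bt)/(1+(2b+c)t+b(b+c)t²), t/(1+(2b+c)t+b(b+c)t²))`. -/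
theorem orth_tilde_coeff_array_riordan
    (b c : ℝ) (hb : b ≠ 0) (hc : c ≠ 0)
    (Qt : ℕ → Polynomial ℝ)
    (hQt0 : Qt 0 = 1)
    (hQt1 : Qt 1 = Polynomial.X - Polynomial.C (b + c))
    (hQt : ∀ n, 2 ≤ n →
      Qt n = (Polynomial.X - Polynomial.C (2 * b + c)) * Qt (n - 1)
             - Polynomial.C (b * (b + c)) * Qt (n - 2))
    (n k : ℕ) :
    (Qt n).coeff k =
      PowerSeries.coeff (R := ℝ) n
        ((1 + PowerSeries.C (R := ℝ) b * PowerSeries.X) *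
          (1 + PowerSeries.C (R := ℝ) (2 * b + c) * PowerSeries.X
             + PowerSeries.C (R := ℝ) (b * (b + c)) * PowerSeries.X ^ 2)⁻¹ *
          (PowerSeries.X *
            (1 + PowerSeries.C (R := ℝ) (2 * b + c) * PowerSeries.X
               + PowerSeries.C (R := ℝ) (b * (b + c)) * PowerSeries.X ^ 2)⁻¹) ^ k) := by
  set a : ℝ := 2 * b + c with ha
  set e : ℝ := b * (b + c) with he
  set D : PowerSeries ℝ := 1 + PowerSeries.C (R := ℝ) a * PowerSeries.X
      + PowerSeries.C (R := ℝ) e * PowerSeries.X ^ 2 with hDdef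
  have hD0 : PowerSeries.constantCoeff (R := ℝ) D = 1 := by
    simp [hDdef]
  have hDu : D * D⁻¹ = 1 := PowerSeries.mul_inv_cancel _ (by rw [hD0]; norm_num)
  set g : ℕ → PowerSeries ℝ := fun k =>
    (1 + PowerSeries.C (R := ℝ) b * PowerSeries.X) * D⁻¹ * (PowerSeries.X * D⁻¹) ^ k with hg
  show (Qt n).coeff k = PowerSeries.coeff (R := ℝ) n (g k)
  -- expansion of multiplication by D
  have expand : ∀ f : PowerSeries ℝ, D * f
      = f + PowerSeries.C (R := ℝ) a * (PowerSeries.X * f)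
          + PowerSeries.C (R := ℝ) e * (PowerSeries.X * (PowerSeries.X * f)) := by
    intro f; rw [hDdef]; ring
  have L1 : ∀ f : PowerSeries ℝ, PowerSeries.coeff (R := ℝ) 1 (D * f)
      = PowerSeries.coeff (R := ℝ) 1 f + a * PowerSeries.coeff (R := ℝ) 0 f := by
    intro f
    rw [expand]
    simp [PowerSeries.coeff_succ_X_mul]
  have L2 : ∀ (m : ℕ) (f : PowerSeries ℝ), PowerSeries.coeff (R := ℝ) (m + 2) (D * f)
      = PowerSeries.coeff (R := ℝ) (m + 2) f + a * PowerSeries.coeff (R := ℝ) (m + 1) f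
        + e * PowerSeries.coeff (R := ℝ) m f := by
    intro m f
    rw [expand]
    simp only [map_add, PowerSeries.coeff_C_mul]
    rw [show m + 2 = (m + 1) + 1 from rfl]
    rw [PowerSeries.coeff_succ_X_mul, PowerSeries.coeff_succ_X_mul,
      PowerSeries.coeff_succ_X_mul]
  have hM0 : D * g 0 = 1 + PowerSeries.C (R := ℝ) b * PowerSeries.X := by
    have : D * g 0 = (1 + PowerSeries.C (R := ℝ) b * PowerSeries.X) * (D * D⁻¹) := by
      rw [hg]; ring
    rw [this, hDu, mul_one]
  have hM : ∀ j : ℕ, D * g (j + 1) = PowerSeries.X * g j := by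
    intro j
    have : D * g (j + 1) = PowerSeries.X * g j * (D * D⁻¹) := by
      rw [hg]; simp only [pow_succ]; ring
    rw [this, hDu, mul_one]
  have h0 : ∀ j : ℕ, PowerSeries.coeff (R := ℝ) 0 (g j) = if j = 0 then 1 else 0 := by
    intro j
    rw [hg]
    simp only [PowerSeries.coeff_zero_eq_constantCoeff, map_mul, map_pow, map_add, map_one,
      PowerSeries.constantCoeff_C, PowerSeries.constantCoeff_X, PowerSeries.constantCoeff_inv,
      hD0]
    cases j with
    | zero => norm_num
    | succ j => simp [zero_pow]
  -- coefficient 1 values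
  have h1 : ∀ j : ℕ, PowerSeries.coeff (R := ℝ) 1 (g j)
      = (Polynomial.X - Polynomial.C (b + c)).coeff j := by
    intro j
    cases j with
    | zero =>
      have := L1 (g 0)
      rw [hM0] at this
      simp only [map_add, map_one, PowerSeries.coeff_one, PowerSeries.coeff_C_mul,
        PowerSeries.coeff_one_X] at this
      rw [h0 0] at this
      simp only [Polynomial.coeff_sub, Polynomial.coeff_X_zero, Polynomial.coeff_C_zero]
      norm_num at this
      linarith [this]
    | succ j =>
      have := L1 (g (j + 1))
      rw [hM j] at this
      rw [PowerSeries.coeff_succ_X_mul, h0 j, h0 (j + 1)] at this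
      simp only [Nat.succ_ne_zero, if_false, mul_zero, add_zero] at this
      rw [← this]
      cases j with
      | zero => simp
      | succ i =>
        simp [Polynomial.coeff_X]
  suffices main : ∀ n k, (Qt n).coeff k = PowerSeries.coeff (R := ℝ) n (g k) from main n k
  clear n k
  intro n
  induction n using Nat.strong_induction_on with
  | _ n ih =>
    rcases n with _ | _ | m
    · intro k
      rw [hQt0, Polynomial.coeff_one, h0]
    · intro k
      rw [hQt1]
      exact (h1 k).symm
    · intro k
      have h2 : Qt (m + 2) = (Polynomial.X - Polynomial.C a) * Qt (m + 1)
          - Polynomial.C e * Qt m := by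
        have := hQt (m + 2) (by omega)
        simpa using this
      have ih1 := ih (m + 1) (by omega)
      have ih0 := ih m (by omega)
      rw [h2, Polynomial.coeff_sub, Polynomial.coeff_C_mul, sub_mul,
        Polynomial.coeff_sub, Polynomial.coeff_C_mul]
      cases k with
      | zero =>
        have key := L2 m (g 0)
        rw [hM0] at key
        have hz : PowerSeries.coeff (R := ℝ) (m + 2)
            (1 + PowerSeries.C (R := ℝ) b * PowerSeries.X) = 0 := by
          simp [PowerSeries.coeff_one, PowerSeries.coeff_C_mul, PowerSeries.coeff_X]
        rw [hz] at key
        have hx : (Polynomial.X * Qt (m + 1)).coeff 0 = 0 := by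
          simp [Polynomial.mul_coeff_zero]
        rw [hx, ih1 0, ih0 0]
        linarith
      | succ j =>
        have key := L2 m (g (j + 1))
        rw [hM j, PowerSeries.coeff_succ_X_mul] at key
        rw [Polynomial.coeff_X_mul, ih1 (j + 1), ih1 j, ih0 (j + 1)]
        linarith
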